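/- The map Ψ₂' : (0, ∞) × (ℝ/ℤ) → Γ₂' defined by Ψ₂'(r, τ + ℤ) := q((r, 0), τ) is well defined and is a homeomorphism onto Γ₂' (with its topology as a subspace of Q_θ); similarly, the map Ψ₂'' : (0, ∞) × (ℝ/θℤ) → Γ₂'' defined by Ψ₂''(r, τ + θℤ) := q((0, r), τ) is well defined and is a homeomorphism onto Γ₂''. -/

import Mathlib

open Filter Topology

/-- The equivalence relation `∼` on `ℂ² × ℝ`: `((z₁,z₂),τ) ∼ ((w₁,w₂),σ)` iff
`|z₁| = |w₁|`, `|z₂| = |w₂|`, and moreover `τ - σ ∈ ℤ` when `z₁ ≠ 0 = z₂`,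
`τ - σ ∈ θℤ` when `z₁ = 0 ≠ z₂`, and `τ = σ` when `z₁ = z₂ = 0`. -/
def mrel (θ : ℝ) (p q : (ℂ × ℂ) × ℝ) : Prop :=
  ‖p.1.1‖ = ‖q.1.1‖ ∧
  ‖p.1.2‖ = ‖q.1.2‖ ∧
  (p.1.1 ≠ 0 ∧ p.1.2 = 0 → ∃ k : ℤ, p.2 - q.2 = (k : ℝ)) ∧
  (p.1.1 = 0 ∧ p.1.2 ≠ 0 → ∃ k : ℤ, p.2 - q.2 = θ * (k : ℝ)) ∧
  (p.1.1 = 0 ∧ p.1.2 = 0 → p.2 = q.2)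

theorem mrel_equivalence (θ : ℝ) : Equivalence (mrel θ) := by
  constructor
  · exact fun p => ⟨rfl, rfl, fun _ => ⟨0, by simp⟩, fun _ => ⟨0, by simp⟩, fun _ => rfl⟩
  · rintro p q ⟨h1, h2, h3, h4, h5⟩
    have key : ∀ a b : ℂ, ‖a‖ = ‖b‖ → (a = 0 ↔ b = 0) := by
      intro a b h
      rw [← norm_eq_zero, h, norm_eq_zero]
    have e1 : p.1.1 = 0 ↔ q.1.1 = 0 := key _ _ h1
    have e2 : p.1.2 = 0 ↔ q.1.2 = 0 := key _ _ h2
    refine ⟨h1.symm, h2.symm, ?_, ?_, ?_⟩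
    · rintro ⟨hq1, hq2⟩
      obtain ⟨k, hk⟩ := h3 ⟨fun h => hq1 (e1.mp h), e2.mpr hq2⟩
      exact ⟨-k, by push_cast; linarith⟩
    · rintro ⟨hq1, hq2⟩
      obtain ⟨k, hk⟩ := h4 ⟨e1.mpr hq1, fun h => hq2 (e2.mp h)⟩
      exact ⟨-k, by push_cast; linarith⟩
    · rintro ⟨hq1, hq2⟩
      exact (h5 ⟨e1.mpr hq1, e2.mpr hq2⟩).symm
  · rintro p q r ⟨h1, h2, h3, h4, h5⟩ ⟨g1, g2, g3, g4, g5⟩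
    have key : ∀ a b : ℂ, ‖a‖ = ‖b‖ → (a = 0 ↔ b = 0) := by
      intro a b h
      rw [← norm_eq_zero, h, norm_eq_zero]
    have e1 : p.1.1 = 0 ↔ q.1.1 = 0 := key _ _ h1
    have e2 : p.1.2 = 0 ↔ q.1.2 = 0 := key _ _ h2
    refine ⟨h1.trans g1, h2.trans g2, ?_, ?_, ?_⟩
    · rintro ⟨hp1, hp2⟩
      obtain ⟨k, hk⟩ := h3 ⟨hp1, hp2⟩
      obtain ⟨l, hl⟩ := g3 ⟨fun h => hp1 (e1.mpr h), e2.mp hp2⟩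
      exact ⟨k + l, by push_cast; linarith⟩
    · rintro ⟨hp1, hp2⟩
      obtain ⟨k, hk⟩ := h4 ⟨hp1, hp2⟩
      obtain ⟨l, hl⟩ := g4 ⟨e1.mp hp1, fun h => hp2 (e2.mpr h)⟩
      refine ⟨k + l, by push_cast; linarith [mul_add θ (k : ℝ) (l : ℝ)]⟩
    · rintro ⟨hp1, hp2⟩
      exact (h5 ⟨hp1, hp2⟩).trans (g5 ⟨e1.mp hp1, e2.mp hp2⟩)

/-- The setoid on `ℂ² × ℝ` given by the relation `∼`. -/
def mSetoid (θ : ℝ) : Setoid ((ℂ × ℂ) × ℝ) := ⟨mrel θ, mrel_equivalence θ⟩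

/-- The quotient space `Q_θ = (ℂ² × ℝ)/∼`, with the quotient topology. -/
abbrev Qspace (θ : ℝ) : Type := Quotient (mSetoid θ)

/-- The quotient map `q : ℂ² × ℝ → Q_θ`. -/
def qmap (θ : ℝ) : (ℂ × ℂ) × ℝ → Qspace θ := Quotient.mk (mSetoid θ)


/-- `Γ₁ = q({((z₁,z₂),τ) : z₁ ≠ 0 and z₂ ≠ 0})`. -/
def Gamma1 (θ : ℝ) : Set (Qspace θ) := qmap θ '' {p | p.1.1 ≠ 0 ∧ p.1.2 ≠ 0}

/-- `Γ₂' = q({((z₁,z₂),τ) : z₁ ≠ 0 = z₂})`. -/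
def Gamma2' (θ : ℝ) : Set (Qspace θ) := qmap θ '' {p | p.1.1 ≠ 0 ∧ p.1.2 = 0}

/-- `Γ₂'' = q({((z₁,z₂),τ) : z₁ = 0 ≠ z₂})`. -/
def Gamma2'' (θ : ℝ) : Set (Qspace θ) := qmap θ '' {p | p.1.1 = 0 ∧ p.1.2 ≠ 0}

/-- `Γ₂ = Γ₂' ∪ Γ₂''`. -/
def Gamma2 (θ : ℝ) : Set (Qspace θ) := Gamma2' θ ∪ Gamma2'' θ

/-- `Γ₃ = q({((0,0),τ) : τ ∈ ℝ})`. -/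
def Gamma3 (θ : ℝ) : Set (Qspace θ) := qmap θ '' {p | p.1.1 = 0 ∧ p.1.2 = 0}
noncomputable section

open AddSubgroup Set

namespace G2helper

lemma coe_ne (r : {r : ℝ // 0 < r}) : ((r : ℝ) : ℂ) ≠ 0 :=
  Complex.ofReal_ne_zero.mpr r.2.ne'

lemma qmap_eqA (θ : ℝ) (r r' : {r : ℝ // 0 < r}) (τ τ' : ℝ) :
    qmap θ ((((r:ℝ) : ℂ), 0), τ) = qmap θ ((((r':ℝ) : ℂ), 0), τ') ↔
      r = r' ∧ ∃ k : ℤ, τ - τ' = (k : ℝ) := by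
  constructor
  · intro h
    have hm : mrel θ ((((r:ℝ) : ℂ), 0), τ) ((((r':ℝ) : ℂ), 0), τ') := Quotient.exact h
    obtain ⟨h1, _, h3, _, _⟩ := hm
    simp only [Complex.norm_real, Real.norm_eq_abs, abs_of_pos r.2, abs_of_pos r'.2] at h1
    exact ⟨Subtype.ext h1, h3 ⟨coe_ne r, rfl⟩⟩
  · rintro ⟨rfl, k, hk⟩
    exact Quotient.sound ⟨rfl, rfl, fun _ => ⟨k, hk⟩,
      fun h => absurd h.1 (coe_ne r), fun h => absurd h.1 (coe_ne r)⟩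

/-- The bare map underlying `Ψ₂'`. -/
def psiA (θ : ℝ) : {r : ℝ // 0 < r} × AddCircle (1 : ℝ) → Qspace θ :=
  fun p => Quotient.liftOn' p.2 (fun τ => qmap θ ((((p.1 : ℝ) : ℂ), 0), τ)) (by
    intro a b hab
    obtain ⟨k, hk⟩ := mem_zmultiples_iff.mp (QuotientAddGroup.leftRel_apply.mp hab)
    refine (qmap_eqA θ p.1 p.1 a b).mpr ⟨rfl, ⟨-k, ?_⟩⟩
    simp only [zsmul_eq_mul, mul_one] at hk
    push_cast
    linarith)

lemma psiA_apply (θ : ℝ) (r : {r : ℝ // 0 < r}) (τ : ℝ) :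
    psiA θ (r, (τ : AddCircle (1:ℝ))) = qmap θ ((((r:ℝ) : ℂ), 0), τ) := rfl

lemma psiA_mem (θ : ℝ) (p : {r : ℝ // 0 < r} × AddCircle (1 : ℝ)) :
    psiA θ p ∈ Gamma2' θ := by
  obtain ⟨r, t⟩ := p
  induction t using Quotient.inductionOn' with
  | h τ => exact ⟨((((r:ℝ) : ℂ), 0), τ), ⟨coe_ne r, rfl⟩, rfl⟩

end G2helper
namespace G2helper

/-- `Ψ₂'` as a map into the subtype `Γ₂'`. -/
def FA (θ : ℝ) : {r : ℝ // 0 < r} × AddCircle (1 : ℝ) → (Gamma2' θ) :=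
  fun p => ⟨psiA θ p, psiA_mem θ p⟩

lemma FA_injective (θ : ℝ) : Function.Injective (FA θ) := by
  rintro ⟨r, t⟩ ⟨r', t'⟩ h
  induction t using Quotient.inductionOn' with
  | h τ =>
  induction t' using Quotient.inductionOn' with
  | h τ' =>
  have h' : qmap θ ((((r:ℝ) : ℂ), 0), τ) = qmap θ ((((r':ℝ) : ℂ), 0), τ') :=
    congrArg Subtype.val h
  obtain ⟨hr, k, hk⟩ := (qmap_eqA θ r r' τ τ').mp h'
  refine Prod.ext hr ?_
  show (τ : AddCircle (1:ℝ)) = (τ' : AddCircle (1:ℝ))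
  rw [QuotientAddGroup.eq_iff_sub_mem]
  exact ⟨k, by simp only [zsmul_eq_mul, mul_one]; linarith⟩

lemma FA_surjective (θ : ℝ) : Function.Surjective (FA θ) := by
  rintro ⟨x, p, ⟨h1, h2⟩, rfl⟩
  have hpos : 0 < ‖p.1.1‖ := by
    simpa [norm_pos_iff] using h1
  refine ⟨(⟨‖p.1.1‖, hpos⟩, (p.2 : AddCircle (1:ℝ))), Subtype.ext ?_⟩
  show qmap θ (((‖p.1.1‖ : ℂ), 0), p.2) = qmap θ p
  refine Quotient.sound ⟨?_, ?_, fun _ => ⟨0, by ring⟩,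
    fun h => absurd h.1 (Complex.ofReal_ne_zero.mpr hpos.ne'),
    fun h => absurd h.1 (Complex.ofReal_ne_zero.mpr hpos.ne')⟩
  · simp [Complex.norm_real, Real.norm_eq_abs, abs_of_pos hpos]
  · simp [h2]

lemma FA_continuous (θ : ℝ) : Continuous (FA θ) := by
  apply Continuous.subtype_mk
  have key : Continuous (fun p : {r : ℝ // 0 < r} × ℝ => qmap θ ((((p.1:ℝ) : ℂ), 0), p.2)) := by
    apply Continuous.comp continuous_quotient_mk'
    fun_prop
  exact (IsOpenQuotientMap.id.prodMap QuotientAddGroup.isOpenQuotientMap_mk).continuous_comp_iff.mp key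

end G2helper
namespace G2helper

open Set

lemma FA_isOpenMap (θ : ℝ) : IsOpenMap (FA θ) := by
  intro U hU
  -- push `U` into `ℝ × AddCircle 1`
  set U' : Set (ℝ × AddCircle (1:ℝ)) := (Prod.map (Subtype.val) id) '' U with hU'def
  have hU'open : IsOpen U' :=
    ((isOpen_Ioi (a := (0:ℝ))).isOpenEmbedding_subtypeVal.prodMap
      Topology.IsOpenEmbedding.id).isOpenMap _ hU
  -- the saturated open set in `ℂ² × ℝ`
  set W : Set ((ℂ × ℂ) × ℝ) :=
    {p | p.1.1 ≠ 0 ∧ ((‖p.1.1‖, ((p.2 : ℝ) : AddCircle (1:ℝ))) ∈ U' ∨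
      (p.1.2 ≠ 0 ∧ ‖p.1.1‖ ∈ Prod.fst '' U'))} with hWdef
  have habs : Continuous (fun p : (ℂ × ℂ) × ℝ => ‖p.1.1‖) :=
    continuous_norm.comp (continuous_fst.fst)
  have hWopen : IsOpen W := by
    apply IsOpen.inter
    · exact isOpen_compl_singleton.preimage (continuous_fst.fst)
    · apply IsOpen.union
      · exact hU'open.preimage (habs.prodMk
          (continuous_quotient_mk'.comp continuous_snd))
      · exact (isOpen_compl_singleton.preimage (continuous_fst.snd)).inter
          ((isOpenMap_fst _ hU'open).preimage habs)
  -- saturation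
  have hsat1 : ∀ a b : (ℂ × ℂ) × ℝ, mrel θ a b → a ∈ W → b ∈ W := by
    rintro a b ⟨h1, h2, h3, h4, h5⟩ ⟨ha1, hdisj⟩
    have hb1 : b.1.1 ≠ 0 := by
      intro h; apply ha1
      rw [← norm_eq_zero, h1, h, norm_zero]
    refine ⟨hb1, ?_⟩
    rcases hdisj with hin | ⟨ha2, hmem⟩
    · by_cases hb2 : b.1.2 = 0
      · have ha2 : a.1.2 = 0 := by
          rw [← norm_eq_zero, h2, hb2, norm_zero]
        obtain ⟨k, hk⟩ := h3 ⟨ha1, ha2⟩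
        left
        rw [← h1]
        have : ((b.2 : ℝ) : AddCircle (1:ℝ)) = ((a.2 : ℝ) : AddCircle (1:ℝ)) := by
          rw [QuotientAddGroup.eq_iff_sub_mem]
          exact ⟨-k, by simp only [zsmul_eq_mul, mul_one]; push_cast; linarith⟩
        rwa [this]
      · right
        refine ⟨hb2, ?_⟩
        rw [← h1]
        exact ⟨(‖a.1.1‖, ((a.2 : ℝ) : AddCircle (1:ℝ))), hin, rfl⟩
    · right
      refine ⟨?_, by rwa [← h1]⟩
      intro h; apply ha2
      rw [← norm_eq_zero, h2, h, norm_zero]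
  have hpre : qmap θ ⁻¹' (qmap θ '' W) = W := by
    ext a
    constructor
    · rintro ⟨b, hbW, hba⟩
      exact hsat1 b a (Quotient.exact hba) hbW
    · intro h; exact ⟨a, h, rfl⟩
  have hVopen : IsOpen (qmap θ '' W) := by
    rw [isOpen_coinduced (f := Quotient.mk' (s := mSetoid θ))]
    show IsOpen (qmap θ ⁻¹' (qmap θ '' W))
    rw [hpre]; exact hWopen
  have himage : FA θ '' U = Subtype.val ⁻¹' (qmap θ '' W) := by
    ext x
    constructor
    · rintro ⟨⟨r, t⟩, hmemU, rfl⟩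
      induction t using Quotient.inductionOn' with
      | h τ =>
        refine ⟨((((r:ℝ) : ℂ), 0), τ), ⟨coe_ne r, Or.inl ?_⟩, rfl⟩
        refine ⟨(r, (τ : AddCircle (1:ℝ))), hmemU, ?_⟩
        simp [Prod.map, Complex.norm_real, Real.norm_eq_abs, abs_of_pos r.2]
    · rintro ⟨p, ⟨hp1, hdisj⟩, hpx⟩
      obtain ⟨p₀, ⟨h01, h02⟩, h0x⟩ := x.2
      have hm : mrel θ p p₀ := Quotient.exact (hpx.trans h0x.symm)
      have hp2 : p.1.2 = 0 := by
        rw [← norm_eq_zero, hm.2.1, h02, norm_zero]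
      rcases hdisj with hin | ⟨hne, _⟩
      · obtain ⟨⟨r, t⟩, hrtU, heq⟩ := hin
        obtain ⟨heq1, heq2⟩ := Prod.ext_iff.mp heq
        refine ⟨(r, t), hrtU, Subtype.ext ?_⟩
        have ht : t = ((p.2 : ℝ) : AddCircle (1:ℝ)) := heq2
        subst ht
        show qmap θ ((((r:ℝ) : ℂ), 0), p.2) = x.val
        rw [← hpx]
        refine Quotient.sound ⟨?_, by simp [hp2], fun _ => ⟨0, by ring⟩,
          fun h => absurd h.1 (coe_ne r), fun h => absurd h.1 (coe_ne r)⟩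
        simp only [Complex.norm_real, Real.norm_eq_abs, abs_of_pos r.2]
        exact heq1
      · exact absurd hp2 hne
  rw [himage]
  exact hVopen.preimage continuous_subtype_val

end G2helper
namespace G2helper

open Set

lemma qmap_eqB (θ : ℝ) (r r' : {r : ℝ // 0 < r}) (τ τ' : ℝ) :
    qmap θ ((0, ((r:ℝ) : ℂ)), τ) = qmap θ ((0, ((r':ℝ) : ℂ)), τ') ↔
      r = r' ∧ ∃ k : ℤ, τ - τ' = θ * (k : ℝ) := by
  constructor
  · intro h
    have hm : mrel θ ((0, ((r:ℝ) : ℂ)), τ) ((0, ((r':ℝ) : ℂ)), τ') := Quotient.exact h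
    obtain ⟨_, h2, _, h4, _⟩ := hm
    simp only [Complex.norm_real, Real.norm_eq_abs, abs_of_pos r.2, abs_of_pos r'.2] at h2
    exact ⟨Subtype.ext h2, h4 ⟨rfl, coe_ne r⟩⟩
  · rintro ⟨rfl, k, hk⟩
    exact Quotient.sound ⟨rfl, rfl, fun h => absurd rfl h.1,
      fun _ => ⟨k, hk⟩, fun h => absurd h.2 (coe_ne r)⟩

/-- The bare map underlying `Ψ₂''`. -/
def psiB (θ : ℝ) : {r : ℝ // 0 < r} × AddCircle θ → Qspace θ :=
  fun p => Quotient.liftOn' p.2 (fun τ => qmap θ ((0, ((p.1 : ℝ) : ℂ)), τ)) (by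
    intro a b hab
    obtain ⟨k, hk⟩ := mem_zmultiples_iff.mp (QuotientAddGroup.leftRel_apply.mp hab)
    refine (qmap_eqB θ p.1 p.1 a b).mpr ⟨rfl, ⟨-k, ?_⟩⟩
    simp only [zsmul_eq_mul] at hk
    push_cast
    nlinarith [hk])

lemma psiB_mem (θ : ℝ) (p : {r : ℝ // 0 < r} × AddCircle θ) :
    psiB θ p ∈ Gamma2'' θ := by
  obtain ⟨r, t⟩ := p
  induction t using Quotient.inductionOn' with
  | h τ => exact ⟨((0, ((r:ℝ) : ℂ)), τ), ⟨rfl, coe_ne r⟩, rfl⟩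

/-- `Ψ₂''` as a map into the subtype `Γ₂''`. -/
def FB (θ : ℝ) : {r : ℝ // 0 < r} × AddCircle θ → (Gamma2'' θ) :=
  fun p => ⟨psiB θ p, psiB_mem θ p⟩

lemma FB_injective (θ : ℝ) : Function.Injective (FB θ) := by
  rintro ⟨r, t⟩ ⟨r', t'⟩ h
  induction t using Quotient.inductionOn' with
  | h τ =>
  induction t' using Quotient.inductionOn' with
  | h τ' =>
  have h' : qmap θ ((0, ((r:ℝ) : ℂ)), τ) = qmap θ ((0, ((r':ℝ) : ℂ)), τ') :=
    congrArg Subtype.val h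
  obtain ⟨hr, k, hk⟩ := (qmap_eqB θ r r' τ τ').mp h'
  refine Prod.ext hr ?_
  show (τ : AddCircle θ) = (τ' : AddCircle θ)
  rw [QuotientAddGroup.eq_iff_sub_mem]
  exact ⟨k, by simp only [zsmul_eq_mul]; linarith [mul_comm θ (k:ℝ)]⟩

lemma FB_surjective (θ : ℝ) : Function.Surjective (FB θ) := by
  rintro ⟨x, p, ⟨h1, h2⟩, rfl⟩
  have hpos : 0 < ‖p.1.2‖ := by
    simpa [norm_pos_iff] using h2
  refine ⟨(⟨‖p.1.2‖, hpos⟩, (p.2 : AddCircle θ)), Subtype.ext ?_⟩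
  show qmap θ ((0, (‖p.1.2‖ : ℂ)), p.2) = qmap θ p
  refine Quotient.sound ⟨?_, ?_, fun h => absurd rfl h.1,
    fun _ => ⟨0, by push_cast; ring⟩,
    fun h => absurd h.2 (Complex.ofReal_ne_zero.mpr hpos.ne')⟩
  · simp [h1]
  · simp [Complex.norm_real, Real.norm_eq_abs, abs_of_pos hpos]

lemma FB_continuous (θ : ℝ) : Continuous (FB θ) := by
  apply Continuous.subtype_mk
  have key : Continuous (fun p : {r : ℝ // 0 < r} × ℝ => qmap θ ((0, ((p.1:ℝ) : ℂ)), p.2)) := by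
    apply Continuous.comp continuous_quotient_mk'
    fun_prop
  exact (IsOpenQuotientMap.id.prodMap QuotientAddGroup.isOpenQuotientMap_mk).continuous_comp_iff.mp key

lemma FB_isOpenMap (θ : ℝ) : IsOpenMap (FB θ) := by
  intro U hU
  set U' : Set (ℝ × AddCircle θ) := (Prod.map (Subtype.val) id) '' U with hU'def
  have hU'open : IsOpen U' :=
    ((isOpen_Ioi (a := (0:ℝ))).isOpenEmbedding_subtypeVal.prodMap
      Topology.IsOpenEmbedding.id).isOpenMap _ hU
  set W : Set ((ℂ × ℂ) × ℝ) :=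
    {p | p.1.2 ≠ 0 ∧ ((‖p.1.2‖, ((p.2 : ℝ) : AddCircle θ)) ∈ U' ∨
      (p.1.1 ≠ 0 ∧ ‖p.1.2‖ ∈ Prod.fst '' U'))} with hWdef
  have habs : Continuous (fun p : (ℂ × ℂ) × ℝ => ‖p.1.2‖) :=
    continuous_norm.comp (continuous_fst.snd)
  have hWopen : IsOpen W := by
    apply IsOpen.inter
    · exact isOpen_compl_singleton.preimage (continuous_fst.snd)
    · apply IsOpen.union
      · exact hU'open.preimage (habs.prodMk
          (continuous_quotient_mk'.comp continuous_snd))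
      · exact (isOpen_compl_singleton.preimage (continuous_fst.fst)).inter
          ((isOpenMap_fst _ hU'open).preimage habs)
  have hsat1 : ∀ a b : (ℂ × ℂ) × ℝ, mrel θ a b → a ∈ W → b ∈ W := by
    rintro a b ⟨h1, h2, h3, h4, h5⟩ ⟨ha2, hdisj⟩
    have hb2 : b.1.2 ≠ 0 := by
      intro h; apply ha2
      rw [← norm_eq_zero, h2, h, norm_zero]
    refine ⟨hb2, ?_⟩
    rcases hdisj with hin | ⟨ha1, hmem⟩
    · by_cases hb1 : b.1.1 = 0
      · have ha1 : a.1.1 = 0 := by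
          rw [← norm_eq_zero, h1, hb1, norm_zero]
        obtain ⟨k, hk⟩ := h4 ⟨ha1, ha2⟩
        left
        rw [← h2]
        have : ((b.2 : ℝ) : AddCircle θ) = ((a.2 : ℝ) : AddCircle θ) := by
          rw [QuotientAddGroup.eq_iff_sub_mem]
          exact ⟨-k, by simp only [zsmul_eq_mul]; push_cast; nlinarith [hk]⟩
        rwa [this]
      · right
        refine ⟨hb1, ?_⟩
        rw [← h2]
        exact ⟨(‖a.1.2‖, ((a.2 : ℝ) : AddCircle θ)), hin, rfl⟩
    · right
      refine ⟨?_, by rwa [← h2]⟩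
      intro h; apply ha1
      rw [← norm_eq_zero, h1, h, norm_zero]
  have hpre : qmap θ ⁻¹' (qmap θ '' W) = W := by
    ext a
    constructor
    · rintro ⟨b, hbW, hba⟩
      exact hsat1 b a (Quotient.exact hba) hbW
    · intro h; exact ⟨a, h, rfl⟩
  have hVopen : IsOpen (qmap θ '' W) := by
    rw [isOpen_coinduced (f := Quotient.mk' (s := mSetoid θ))]
    show IsOpen (qmap θ ⁻¹' (qmap θ '' W))
    rw [hpre]; exact hWopen
  have himage : FB θ '' U = Subtype.val ⁻¹' (qmap θ '' W) := by
    ext x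
    constructor
    · rintro ⟨⟨r, t⟩, hmemU, rfl⟩
      induction t using Quotient.inductionOn' with
      | h τ =>
        refine ⟨((0, ((r:ℝ) : ℂ)), τ), ⟨coe_ne r, Or.inl ?_⟩, rfl⟩
        refine ⟨(r, (τ : AddCircle θ)), hmemU, ?_⟩
        simp [Prod.map, Complex.norm_real, Real.norm_eq_abs, abs_of_pos r.2]
    · rintro ⟨p, ⟨hp2, hdisj⟩, hpx⟩
      obtain ⟨p₀, ⟨h01, h02⟩, h0x⟩ := x.2
      have hm : mrel θ p p₀ := Quotient.exact (hpx.trans h0x.symm)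
      have hp1 : p.1.1 = 0 := by
        rw [← norm_eq_zero, hm.1, h01, norm_zero]
      rcases hdisj with hin | ⟨hne, _⟩
      · obtain ⟨⟨r, t⟩, hrtU, heq⟩ := hin
        obtain ⟨heq1, heq2⟩ := Prod.ext_iff.mp heq
        refine ⟨(r, t), hrtU, Subtype.ext ?_⟩
        have ht : t = ((p.2 : ℝ) : AddCircle θ) := heq2
        subst ht
        show qmap θ ((0, ((r:ℝ) : ℂ)), p.2) = x.val
        rw [← hpx]
        refine Quotient.sound ⟨by simp [hp1], ?_, fun h => absurd hp1 ?_,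
          fun _ => ⟨0, by push_cast; ring⟩, fun h => absurd h.2 (coe_ne r)⟩
        · simp only [Complex.norm_real, Real.norm_eq_abs, abs_of_pos r.2]
          exact heq1
        · intro h'; exact h.1 (by simp)
      · exact absurd hp1 hne
  rw [himage]
  exact hVopen.preimage continuous_subtype_val

end G2helper
/-- The map `Ψ₂' : (0,∞) × (ℝ/ℤ) → Γ₂'`, `Ψ₂'(r, τ + ℤ) = q((r, 0), τ)`, is well defined
and a homeomorphism onto `Γ₂'`; similarly `Ψ₂'' : (0,∞) × (ℝ/θℤ) → Γ₂''`,
`Ψ₂''(r, τ + θℤ) = q((0, r), τ)`, is well defined and a homeomorphism onto `Γ₂''`. -/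
theorem Gamma2'_Gamma2''_homeo (θ : ℝ) (hθ : Irrational θ) :
    (∃ Ψ : {r : ℝ // 0 < r} × AddCircle (1 : ℝ) ≃ₜ (Gamma2' θ),
      ∀ (r : {r : ℝ // 0 < r}) (τ : ℝ),
        (Ψ (r, (τ : AddCircle (1 : ℝ))) : Qspace θ) = qmap θ ((((r : ℝ) : ℂ), 0), τ)) ∧
    (∃ Ψ : {r : ℝ // 0 < r} × AddCircle θ ≃ₜ (Gamma2'' θ),
      ∀ (r : {r : ℝ // 0 < r}) (τ : ℝ),
        (Ψ (r, (τ : AddCircle θ)) : Qspace θ) = qmap θ ((0, ((r : ℝ) : ℂ)), τ)) := by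
  constructor
  · exact ⟨Equiv.toHomeomorphOfContinuousOpen
      (Equiv.ofBijective (G2helper.FA θ) ⟨G2helper.FA_injective θ, G2helper.FA_surjective θ⟩)
      (G2helper.FA_continuous θ) (G2helper.FA_isOpenMap θ), fun r τ => rfl⟩
  · exact ⟨Equiv.toHomeomorphOfContinuousOpen
      (Equiv.ofBijective (G2helper.FB θ) ⟨G2helper.FB_injective θ, G2helper.FB_surjective θ⟩)
      (G2helper.FB_continuous θ) (G2helper.FB_isOpenMap θ), fun r τ => rfl⟩
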